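/- For every complex number t with Re t > 0, the principal argument of tanh t satisfies arg(tanh t) = arctan( sin(2 Im t) / sinh(2 Re t) ); in particular Re(tanh t) > 0, so arg(tanh t) ∈ (−π/2, π/2). -/

import Mathlib

open Complex

lemma sinh_decomp (z : ℂ) : Complex.sinh z =
    Real.sinh z.re * Real.cos z.im + Real.cosh z.re * Real.sin z.im * Complex.I := by
  rw [← Complex.re_add_im z, Complex.sinh_add, Complex.cosh_mul_I, Complex.sinh_mul_I]
  push_cast; simp; ring

lemma cosh_decomp (z : ℂ) : Complex.cosh z =
    Real.cosh z.re * Real.cos z.im + Real.sinh z.re * Real.sin z.im * Complex.I := by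
  rw [← Complex.re_add_im z, Complex.cosh_add, Complex.cosh_mul_I, Complex.sinh_mul_I]
  push_cast; simp; ring



/-- for `Re t > 0`, `arg(tanh t) = arctan(sin(2 Im t)/sinh(2 Re t))`;
in particular `Re(tanh t) > 0` and `arg(tanh t) ∈ (-π/2, π/2)`. -/
theorem arg_tanh_eq (t : ℂ) (ht : 0 < t.re) :
    Complex.arg (Complex.tanh t) =
      Real.arctan (Real.sin (2 * t.im) / Real.sinh (2 * t.re)) ∧
    0 < (Complex.tanh t).re ∧
    |Complex.arg (Complex.tanh t)| < Real.pi / 2 := by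
  set x := t.re
  set y := t.im
  have hN : 0 < (Real.cosh x * Real.cos y) ^ 2 + (Real.sinh x * Real.sin y) ^ 2 := by
    rcases eq_or_ne (Real.cos y) 0 with h | h
    · have hs : Real.sin y ^ 2 = 1 := by
        have := Real.sin_sq_add_cos_sq y
        nlinarith
      have hx : 0 < Real.sinh x := Real.sinh_pos_iff.2 ht
      have h1 : (Real.sinh x * Real.sin y) ^ 2 = Real.sinh x ^ 2 := by
        rw [mul_pow, hs, mul_one]
      nlinarith [sq_nonneg (Real.cosh x * Real.cos y)]
    · have : 0 < (Real.cosh x * Real.cos y) ^ 2 := by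
        have := Real.cosh_pos x
        positivity
      positivity
  have hnsq : Complex.normSq (Complex.cosh t) =
      (Real.cosh x * Real.cos y) ^ 2 + (Real.sinh x * Real.sin y) ^ 2 := by
    rw [Complex.normSq_apply, cosh_decomp]
    simp [x, y, Complex.sinh_ofReal_re, Complex.cosh_ofReal_re, Complex.sin_ofReal_re, Complex.cos_ofReal_re]
    ring
  have hcosh : Complex.cosh t ≠ 0 := by
    intro h
    rw [h] at hnsq
    simp at hnsq
    rw [← hnsq] at hN
    exact lt_irrefl _ hN
  have hre : (Complex.tanh t).re =
      Real.sinh x * Real.cosh x / Complex.normSq (Complex.cosh t) := by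
    rw [Complex.tanh_eq_sinh_div_cosh, Complex.div_re, sinh_decomp, cosh_decomp]
    simp [x, y, Complex.sinh_ofReal_re, Complex.cosh_ofReal_re, Complex.sin_ofReal_re, Complex.cos_ofReal_re]
    rw [← add_div]
    congr 1
    linear_combination (Real.sinh t.re * Real.cosh t.re) * (Real.sin_sq_add_cos_sq t.im)
  have him : (Complex.tanh t).im =
      Real.sin y * Real.cos y / Complex.normSq (Complex.cosh t) := by
    rw [Complex.tanh_eq_sinh_div_cosh, Complex.div_im, sinh_decomp, cosh_decomp]
    simp [x, y, Complex.sinh_ofReal_re, Complex.cosh_ofReal_re, Complex.sin_ofReal_re, Complex.cos_ofReal_re]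
    rw [div_sub_div_same]
    congr 1
    linear_combination (Real.sin t.im * Real.cos t.im) * (Real.cosh_sq_sub_sinh_sq t.re)
  have hrepos : 0 < (Complex.tanh t).re := by
    rw [hre, hnsq]
    have hx : 0 < Real.sinh x := Real.sinh_pos_iff.2 ht
    have hc := Real.cosh_pos x
    positivity
  have habs : |Complex.arg (Complex.tanh t)| < Real.pi / 2 :=
    Complex.abs_arg_lt_pi_div_two_iff.2 (Or.inl hrepos)
  refine ⟨?_, hrepos, habs⟩
  have harg : Real.tan (Complex.arg (Complex.tanh t)) =
      (Complex.tanh t).im / (Complex.tanh t).re := Complex.tan_arg _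
  have : Complex.arg (Complex.tanh t) =
      Real.arctan ((Complex.tanh t).im / (Complex.tanh t).re) := by
    rw [← harg, Real.arctan_tan (abs_lt.1 habs).1 (abs_lt.1 habs).2]
  rw [this]
  congr 1
  rw [hre, him, Real.sin_two_mul, Real.sinh_two_mul]
  have hn0 : Complex.normSq (Complex.cosh t) ≠ 0 := by rw [hnsq]; exact ne_of_gt hN
  field_simp
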